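/- Suppose the map i↦fix(ψ_i), from the set ℳ of minimal multi-indices to ℝ, is injective. Then either P_X is continuous (has no atoms), or there exist N≥1 and (i₀,…,i_{N−1})∈𝒮^N such that for P-a.e. ω the sequence (ε(T^nω))_{n≥0} is a left shift of the periodic sequence (i₀,…,i_{N−1},i₀,…,i_{N−1},…); in the latter case, up to a P-null set, X takes only the values ψ_{i_k}∘⋯∘ψ_{i_{N−1}}(c) for 0≤k<N, where c=fix(ψ_{i₀}∘⋯∘ψ_{i_{N−1}}). -/

import Mathlib

open MeasureTheory Filter Topology

/-- The affine map `ψ_{i₀} ∘ ⋯ ∘ ψ_{i_{n−1}}` associated with a multi-index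
`l = [i₀,…,i_{n−1}]`, represented as a pair `(B, R)` meaning `y ↦ B + R y`, where
`ψ_j(y) = br j + rr j · y`. -/
def affOfList {S : Type*} (br rr : S → ℝ) : List S → ℝ × ℝ
  | [] => (0, 1)
  | j :: l => (br j + rr j * (affOfList br rr l).1, rr j * (affOfList br rr l).2)

/-- The fixed point of the affine contraction `ψ_l` associated with a nonempty
multi-index `l`. -/
noncomputable def affFix {S : Type*} (br rr : S → ℝ) (l : List S) : ℝ :=
  (affOfList br rr l).1 / (1 - (affOfList br rr l).2)

/-- A multi-index `l ∈ 𝒮ⁿ` (`n ≥ 1`) is minimal if it occurs with positive probability and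
no nonempty strict prefix of `l` has the same fixed point as `l`. -/
def IsMinimal {Ω S : Type*} [MeasurableSpace Ω] (P : Measure Ω) (T : Ω → Ω)
    (ε : Ω → S) (br rr : S → ℝ) (l : List S) : Prop :=
  l ≠ [] ∧
  0 < P {ω | ∀ k : Fin l.length, ε (T^[(k : ℕ)] ω) = l.get k} ∧
  ∀ m : ℕ, 1 ≤ m → m < l.length → affFix br rr (l.take m) ≠ affFix br rr l

section AuxAff
variable {S : Type*} {br rr : S → ℝ}

lemma aff_R_pos (hrr : ∀ j, rr j ∈ Set.Ioo (0:ℝ) 1) (l : List S) :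
    0 < (affOfList br rr l).2 := by
  induction l with
  | nil => norm_num [affOfList]
  | cons j t ih => exact mul_pos (hrr j).1 ih

lemma aff_R_le_one (hrr : ∀ j, rr j ∈ Set.Ioo (0:ℝ) 1) (l : List S) :
    (affOfList br rr l).2 ≤ 1 := by
  induction l with
  | nil => norm_num [affOfList]
  | cons j t ih =>
      calc rr j * (affOfList br rr t).2 ≤ rr j * 1 :=
            mul_le_mul_of_nonneg_left ih (hrr j).1.le
        _ ≤ 1 := by simpa using (hrr j).2.le

lemma aff_R_lt_one (hrr : ∀ j, rr j ∈ Set.Ioo (0:ℝ) 1) {l : List S} (hl : l ≠ []) :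
    (affOfList br rr l).2 < 1 := by
  cases l with
  | nil => simp at hl
  | cons j t =>
      calc rr j * (affOfList br rr t).2 ≤ rr j * 1 :=
            mul_le_mul_of_nonneg_left (aff_R_le_one hrr t) (hrr j).1.le
        _ < 1 := by simpa using (hrr j).2

lemma eq_affFix_of_fixed (hrr : ∀ j, rr j ∈ Set.Ioo (0:ℝ) 1) {l : List S} (hl : l ≠ [])
    {y : ℝ} (h : y = (affOfList br rr l).1 + (affOfList br rr l).2 * y) :
    y = affFix br rr l := by
  have hR := aff_R_lt_one (br := br) hrr hl
  rw [affFix, eq_div_iff (by linarith)]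
  linarith

lemma affFix_fixed (hrr : ∀ j, rr j ∈ Set.Ioo (0:ℝ) 1) {l : List S} (hl : l ≠ []) :
    affFix br rr l = (affOfList br rr l).1 + (affOfList br rr l).2 * affFix br rr l := by
  have hR := aff_R_lt_one (br := br) hrr hl
  have h1 : (1 : ℝ) - (affOfList br rr l).2 ≠ 0 := by linarith
  rw [affFix]
  field_simp
  ring

end AuxAff

lemma hasSum_step (b r : ℕ → ℝ) (x y : ℝ)
    (h1 : HasSum (fun n => (∏ k ∈ Finset.range n, r k) * b n) x)
    (h2 : HasSum (fun n => (∏ k ∈ Finset.range n, r (k+1)) * b (n+1)) y) :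
    x = b 0 + r 0 * y := by
  set f : ℕ → ℝ := fun n => (∏ k ∈ Finset.range n, r k) * b n with hf
  have hf0 : f 0 = b 0 := by simp [hf]
  have h3 : HasSum (fun n => f (n + 1)) (x - b 0) := by
    refine (hasSum_nat_add_iff (f := f) 1).mpr ?_
    have : x - b 0 + ∑ i ∈ Finset.range 1, f i = x := by simp [hf0]
    rw [this]; exact h1
  have h4 : HasSum (fun n => f (n + 1)) (r 0 * y) := by
    have := h2.mul_left (r 0)
    convert this using 2 with n
    · rfl
    simp only [hf]
    rw [Finset.prod_range_succ']
    ring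
  have := h3.unique h4
  linarith

/-- The coding word of length `n` of the trajectory of `ω`. -/
def wrd {Ω S : Type*} (T : Ω → Ω) (ε : Ω → S) : ℕ → Ω → List S
  | 0, _ => []
  | n+1, ω => ε ω :: wrd T ε n (T ω)

section AuxWrd
variable {Ω S : Type*} {T : Ω → Ω} {ε : Ω → S}

@[simp] lemma wrd_length (n : ℕ) (ω : Ω) : (wrd T ε n ω).length = n := by
  induction n generalizing ω with
  | zero => rfl
  | succ n ih => simp [wrd, ih]

lemma wrd_getElem (n : ℕ) (ω : Ω) (k : ℕ) (h : k < n) :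
    (wrd T ε n ω)[k]'(by simpa using h) = ε (T^[k] ω) := by
  induction n generalizing ω k with
  | zero => omega
  | succ n ih =>
      cases k with
      | zero => simp [wrd]
      | succ k =>
          have : (wrd T ε (n+1) ω)[k+1]'(by simpa using h) = (wrd T ε n (T ω))[k]'(by simp; omega) := by
            simp [wrd]
          rw [this, ih _ _ (by omega), Function.iterate_succ_apply]

lemma wrd_get_of_eq {n : ℕ} {ω : Ω} {u : List S} (h : wrd T ε n ω = u) (k : ℕ) (hk : k < n) :
    ε (T^[k] ω) = u.get ⟨k, by rw [← h]; simpa using hk⟩ := by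
  subst h
  rw [List.get_eq_getElem]
  exact (wrd_getElem n ω k hk).symm

lemma wrd_take (n m : ℕ) (ω : Ω) (h : m ≤ n) :
    (wrd T ε n ω).take m = wrd T ε m ω := by
  induction n generalizing ω m with
  | zero => simp_all [wrd]
  | succ n ih =>
      cases m with
      | zero => simp [wrd]
      | succ m => simp [wrd, ih m (T ω) (by omega)]

lemma list_get_congr {l : List S} {i j : ℕ} (hi : i < l.length) (hj : j < l.length)
    (h : i = j) : l.get ⟨i, hi⟩ = l.get ⟨j, hj⟩ := by subst h; rfl

lemma list_getElem_congr {l : List S} {i j : ℕ} (h : i = j) (hi : i < l.length)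
    (hj : j < l.length) : l[i]'hi = l[j]'hj := by subst h; rfl

end AuxWrd

theorem continuous_law_or_periodic_coding
    {Ω : Type*} [MeasurableSpace Ω] (P : Measure Ω) [IsProbabilityMeasure P]
    (T : Ω ≃ᵐ Ω) (hT : Ergodic (⇑T) P)
    {S : Type*} [Countable S] [MeasurableSpace S] [MeasurableSingletonClass S]
    (ε : Ω → S) (hε : Measurable ε) (hpos : ∀ j : S, 0 < P {ω | ε ω = j})
    (br rr : S → ℝ) (hrr : ∀ j, rr j ∈ Set.Ioo (0 : ℝ) 1)
    (hbInt : Integrable (fun ω => br (ε ω)) P)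
    (hlogInt : Integrable (fun ω => Real.log (rr (ε ω))) P)
    (X : Ω → ℝ) (hX : Measurable X)
    (hXsum : ∀ᵐ ω ∂P, HasSum
      (fun n : ℕ => (∏ k ∈ Finset.range n, rr (ε ((⇑T)^[k] ω))) * br (ε ((⇑T)^[n] ω)))
      (X ω))
    (hinj : ∀ l l' : List S, IsMinimal P (⇑T) ε br rr l → IsMinimal P (⇑T) ε br rr l' →
      affFix br rr l = affFix br rr l' → l = l') :
    (∀ a : ℝ, P.map X {a} = 0)
    ∨ ∃ w : List S, 1 ≤ w.length ∧
        (∀ᵐ ω ∂P, ∃ k < w.length,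
          ∀ n : ℕ, ∀ h : (k + n) % w.length < w.length,
            ε ((⇑T)^[n] ω) = w.get ⟨(k + n) % w.length, h⟩) ∧
        (∀ᵐ ω ∂P, ∃ k < w.length,
          X ω = (affOfList br rr (w.drop k)).1
            + (affOfList br rr (w.drop k)).2 * affFix br rr w) := by
  classical
  by_cases hcont : ∀ a : ℝ, P.map X {a} = 0
  · exact Or.inl hcont
  right
  push_neg at hcont
  obtain ⟨a, ha⟩ := hcont
  have hmp : MeasurePreserving (⇑T) P P := hT.toMeasurePreserving
  have hTm : Measurable (⇑T) := T.measurable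
  set B : Set Ω := X ⁻¹' {a} with hBdef
  have hB : MeasurableSet B := hX (measurableSet_singleton a)
  have hBpos : 0 < P B := by
    rw [Measure.map_apply hX (measurableSet_singleton a)] at ha
    exact pos_iff_ne_zero.mpr ha
  set g : Ω → ℕ → ℝ :=
    fun ω n => (∏ k ∈ Finset.range n, rr (ε ((⇑T)^[k] ω))) * br (ε ((⇑T)^[n] ω)) with hgdef
  set Good : Set Ω := {ω | ∀ m : ℕ, HasSum (g ((⇑T)^[m] ω)) (X ((⇑T)^[m] ω))} with hGooddef
  -- pull back a.e. statements along iterates of `T`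
  have hpull : ∀ (j : ℕ) (p : Ω → Prop), (∀ᵐ ω ∂P, p ω) → ∀ᵐ ω ∂P, p ((⇑T)^[j] ω) := by
    intro j p hp
    exact (hmp.iterate j).quasiMeasurePreserving.preimage_null hp
  have hGood_ae : ∀ᵐ ω ∂P, ω ∈ Good := by
    have : ∀ m : ℕ, ∀ᵐ ω ∂P, HasSum (g ((⇑T)^[m] ω)) (X ((⇑T)^[m] ω)) := fun m =>
      hpull m (fun ω => HasSum (g ω) (X ω)) hXsum
    exact ae_all_iff.mpr this
  have hGoodT : ∀ ω, ω ∈ Good → ∀ j, (⇑T)^[j] ω ∈ Good := by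
    intro ω hω j m
    have h := hω (m + j)
    rwa [Function.iterate_add_apply] at h
  -- the basic recursion
  have hRec : ∀ ω ∈ Good, ∀ n : ℕ, X ω =
      (affOfList br rr (wrd (⇑T) ε n ω)).1
        + (affOfList br rr (wrd (⇑T) ε n ω)).2 * X ((⇑T)^[n] ω) := by
    intro ω hω n
    induction n generalizing ω with
    | zero => simp [wrd, affOfList]
    | succ n ih =>
        have h0 : HasSum (g ω) (X ω) := by simpa using hω 0
        have h1 : HasSum (g (T ω)) (X (T ω)) := by simpa using hω 1
        have h2' : HasSum
            (fun n => (∏ k ∈ Finset.range n, rr (ε ((⇑T)^[k+1] ω))) * br (ε ((⇑T)^[n+1] ω)))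
            (X (T ω)) := by
          have hfeq : (fun n => (∏ k ∈ Finset.range n, rr (ε ((⇑T)^[k+1] ω)))
              * br (ε ((⇑T)^[n+1] ω))) = g (T ω) := by
            funext n
            simp [hgdef, Function.iterate_succ_apply]
          rw [hfeq]; exact h1
        have hstep1 : X ω = br (ε ω) + rr (ε ω) * X (T ω) := by
          have := hasSum_step (fun k => br (ε ((⇑T)^[k] ω))) (fun k => rr (ε ((⇑T)^[k] ω)))
            (X ω) (X (T ω)) h0 h2'
          simpa using this
        have hTω : T ω ∈ Good := by simpa using hGoodT ω hω 1
        have ihh := ih (T ω) hTω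
        show X ω = (affOfList br rr (ε ω :: wrd (⇑T) ε n (T ω))).1
          + (affOfList br rr (ε ω :: wrd (⇑T) ε n (T ω))).2 * X ((⇑T)^[n+1] ω)
        rw [affOfList, Function.iterate_succ_apply, hstep1, ihh]
        ring
  -- recurrence to `B`
  have hcons : Conservative (⇑T) P := hmp.conservative
  have hRet : ∀ᵐ ω ∂P, ω ∈ B → ∃ n, 1 ≤ n ∧ (⇑T)^[n] ω ∈ B := by
    filter_upwards [hcons.ae_mem_imp_frequently_image_mem hB.nullMeasurableSet] with ω hω hmem
    obtain ⟨n, hn1, hn2⟩ := ((hω hmem).and_eventually (eventually_ge_atTop 1)).exists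
    exact ⟨n, hn2, hn1⟩
  -- countable decomposition of `B` according to the word up to a return time
  set D : ℕ × List S → Set Ω := fun p =>
    if 1 ≤ p.1 then B ∩ {ω | wrd (⇑T) ε p.1 ω = p.2} ∩ (⇑T)^[p.1] ⁻¹' B ∩ Good else ∅
    with hDdef
  have hcover : ∀ᵐ ω ∂P, ω ∈ B → ω ∈ ⋃ p, D p := by
    filter_upwards [hRet, hGood_ae] with ω h1 h2 hmem
    obtain ⟨n, hn, hTn⟩ := h1 hmem
    refine Set.mem_iUnion.mpr ⟨(n, wrd (⇑T) ε n ω), ?_⟩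
    simp only [hDdef, if_pos hn]
    exact ⟨⟨⟨hmem, rfl⟩, hTn⟩, h2⟩
  have hexists : ∃ p : ℕ × List S, 1 ≤ p.1 ∧ 0 < P (D p) := by
    by_contra hno
    push_neg at hno
    have hz : ∀ p : ℕ × List S, P (D p) = 0 := by
      intro p
      by_cases hp : 1 ≤ p.1
      · have := hno p hp
        simpa [pos_iff_ne_zero, not_not] using this
      · simp [hDdef, hp]
    have hU : P (⋃ p, D p) = 0 := measure_iUnion_null hz
    have hnB : ∀ᵐ ω ∂P, ω ∉ B := by
      filter_upwards [hcover, measure_eq_zero_iff_ae_notMem.mp hU] with ω h1 h2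
      exact fun hb => h2 (h1 hb)
    exact hBpos.ne' (measure_eq_zero_iff_ae_notMem.mpr hnB)
  -- from a positive-measure piece, produce a minimal word with fixed point `a`
  have hstep : ∀ (n : ℕ) (u : List S), 1 ≤ n → 0 < P (D (n, u)) →
      ∃ v : List S, IsMinimal P (⇑T) ε br rr v ∧ affFix br rr v = a ∧ v.length ≤ n ∧
        v = u.take v.length := by
    intro n u hn hpos'
    obtain ⟨ω, hω⟩ := nonempty_of_measure_ne_zero hpos'.ne'
    simp only [hDdef, if_pos hn] at hω
    obtain ⟨⟨⟨hωB, hωw⟩, hωT⟩, hωG⟩ := hω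
    have hlen : u.length = n := by rw [← hωw]; exact wrd_length n ω
    have hXa : X ω = a := hωB
    have hXTa : X ((⇑T)^[n] ω) = a := hωT
    have hune : u ≠ [] := by
      intro h; rw [h] at hlen; simp at hlen; omega
    have hfix : a = (affOfList br rr u).1 + (affOfList br rr u).2 * a := by
      have h := hRec ω hωG n
      rw [hωw, hXa, hXTa] at h
      exact h
    have hex : ∃ m, 1 ≤ m ∧ affFix br rr (u.take m) = a := by
      refine ⟨n, hn, ?_⟩
      rw [← hlen, List.take_length]
      exact (eq_affFix_of_fixed hrr hune hfix).symm
    set m := Nat.find hex with hmdef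
    obtain ⟨hm1, hmfix⟩ : 1 ≤ m ∧ affFix br rr (u.take m) = a := Nat.find_spec hex
    have hmn : m ≤ n := Nat.find_min' hex (by
      refine ⟨hn, ?_⟩
      rw [← hlen, List.take_length]
      exact (eq_affFix_of_fixed hrr hune hfix).symm)
    have hvlen : (u.take m).length = m := by
      rw [List.length_take, hlen]; omega
    have hvne : u.take m ≠ [] := by
      intro h; rw [h] at hvlen; simp at hvlen; omega
    refine ⟨u.take m, ⟨hvne, ?_, ?_⟩, hmfix, by rw [hvlen]; omega, by rw [hvlen]⟩
    · refine lt_of_lt_of_le hpos' (measure_mono ?_)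
      intro ω' hω'
      simp only [hDdef, if_pos hn] at hω'
      obtain ⟨⟨⟨_, hw'⟩, _⟩, _⟩ := hω'
      intro k
      obtain ⟨kv, hkv⟩ := k
      have hkm : kv < m := by omega
      simp only [List.get_eq_getElem, List.getElem_take]
      have h2 := wrd_get_of_eq hw' kv (by omega)
      simp only [List.get_eq_getElem] at h2
      exact h2
    · intro m' hm'1 hm'2
      rw [hvlen] at hm'2
      have htt : (u.take m).take m' = u.take m' := by
        rw [List.take_take]
        congr 1
        omega
      rw [htt, hmfix]
      intro hcontra
      exact (Nat.find_min hex hm'2) ⟨hm'1, hcontra⟩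
  obtain ⟨p₀, hp₀, hp₀pos⟩ := hexists
  obtain ⟨w, hwmin, hwfix, -, -⟩ := hstep p₀.1 p₀.2 hp₀ (by rwa [Prod.mk.eta])
  have hNpos : 0 < w.length := List.length_pos_iff_ne_nil.mpr hwmin.1
  have hN : 1 ≤ w.length := hNpos
  -- every positive-measure piece carries the word `w`
  have hwkey : ∀ (n : ℕ) (u : List S), 1 ≤ n → 0 < P (D (n, u)) →
      ∀ ω ∈ D (n, u), wrd (⇑T) ε w.length ω = w := by
    intro n u hn hp ω hω
    obtain ⟨v, hvmin, hvfix, hvn, hvtake⟩ := hstep n u hn hp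
    have hvw : v = w := hinj v w hvmin hwmin (by rw [hvfix, hwfix])
    simp only [hDdef, if_pos hn] at hω
    obtain ⟨⟨⟨_, hωw⟩, _⟩, _⟩ := hω
    have hwrd : wrd (⇑T) ε v.length ω = v := by
      conv_rhs => rw [hvtake, ← hωw]
      exact (wrd_take n v.length ω hvn).symm
    rw [← hvw]
    exact hwrd
  -- a.e. on `B`: prefix is `w` and `T^[N]` stays in `B`
  have hD0 : ∀ᵐ ω ∂P, ω ∈ B →
      (wrd (⇑T) ε w.length ω = w ∧ (⇑T)^[w.length] ω ∈ B) := by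
    have hbadnull : P (⋃ p ∈ {p : ℕ × List S | P (D p) = 0}, D p) = 0 :=
      (measure_biUnion_null_iff (Set.to_countable _)).mpr (fun p hp => hp)
    filter_upwards [hcover, hGood_ae, measure_eq_zero_iff_ae_notMem.mp hbadnull] with ω h1 h2 h3 hmem
    obtain ⟨p, hp⟩ := Set.mem_iUnion.mp (h1 hmem)
    have hp1 : 1 ≤ p.1 := by
      by_contra h
      simp [hDdef, h] at hp
    have hppos : 0 < P (D p) := by
      rcases eq_or_ne (P (D p)) 0 with h | h
      · exact absurd (Set.mem_biUnion (show p ∈ {q : ℕ × List S | P (D q) = 0} from h) hp) h3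
      · exact pos_iff_ne_zero.mpr h
    have hw1 : wrd (⇑T) ε w.length ω = w := hwkey p.1 p.2 hp1 (by rwa [Prod.mk.eta]) ω
      (by rwa [Prod.mk.eta])
    refine ⟨hw1, ?_⟩
    have hrec := hRec ω h2 w.length
    rw [hw1] at hrec
    have hXa : X ω = a := hmem
    have hfixw : a = (affOfList br rr w).1 + (affOfList br rr w).2 * a := by
      have h := affFix_fixed (br := br) (rr := rr) hrr hwmin.1
      rwa [hwfix] at h
    have hRpos := aff_R_pos (br := br) hrr w
    have hXTa : X ((⇑T)^[w.length] ω) = a := by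
      rw [hXa] at hrec
      have h4 : (affOfList br rr w).2 * X ((⇑T)^[w.length] ω) = (affOfList br rr w).2 * a := by
        linarith
      exact mul_left_cancel₀ (ne_of_gt hRpos) h4
    exact hXTa
  have hIter : ∀ᵐ ω ∂P, ∀ j : ℕ, ((⇑T)^[j * w.length] ω ∈ B →
      (wrd (⇑T) ε w.length ((⇑T)^[j * w.length] ω) = w ∧
        (⇑T)^[w.length] ((⇑T)^[j * w.length] ω) ∈ B)) := by
    rw [ae_all_iff]
    intro j
    exact hpull (j * w.length) _ hD0
  -- a.e. on `B`, the coding is exactly `w^∞`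
  have hPerB : ∀ᵐ ω ∂P, ω ∈ B → ∀ n : ℕ,
      ε ((⇑T)^[n] ω) = w.get ⟨n % w.length, Nat.mod_lt n hNpos⟩ := by
    filter_upwards [hIter] with ω hω hmem
    have key : ∀ j : ℕ, (⇑T)^[j * w.length] ω ∈ B ∧
        wrd (⇑T) ε w.length ((⇑T)^[j * w.length] ω) = w := by
      intro j
      induction j with
      | zero =>
          refine ⟨by simpa using hmem, ?_⟩
          exact (hω 0 (by simpa using hmem)).1
      | succ j ih =>
          have h2 := hω j ih.1
          have heq : (⇑T)^[(j+1) * w.length] ω = (⇑T)^[w.length] ((⇑T)^[j * w.length] ω) := by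
            rw [← Function.iterate_add_apply]
            congr 1
            ring
          refine ⟨by rw [heq]; exact h2.2, ?_⟩
          exact (hω (j+1) (by rw [heq]; exact h2.2)).1
    intro n
    have h1 : (⇑T)^[n] ω = (⇑T)^[n % w.length] ((⇑T)^[(n / w.length) * w.length] ω) := by
      rw [← Function.iterate_add_apply]
      congr 1
      exact (Nat.mod_add_div' n w.length).symm
    rw [h1]
    exact wrd_get_of_eq (key (n / w.length)).2 (n % w.length) (Nat.mod_lt n hNpos)
  -- the invariant set of shift-periodic codings
  set PerSet : Set Ω := ⋃ k, ⋃ (_ : k < w.length), ⋂ n : ℕ,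
    (fun ω => ε ((⇑T)^[n] ω)) ⁻¹' {w.get ⟨(k + n) % w.length, Nat.mod_lt _ hNpos⟩}
    with hPerdef
  have hPerMeas : MeasurableSet PerSet := by
    refine MeasurableSet.iUnion fun k => MeasurableSet.iUnion fun _ =>
      MeasurableSet.iInter fun n => ?_
    exact (hε.comp (hTm.iterate n)) (measurableSet_singleton _)
  have hPerSub : PerSet ⊆ T ⁻¹' PerSet := by
    intro ω hω
    simp only [hPerdef, Set.mem_iUnion, Set.mem_iInter, Set.mem_preimage,
      Set.mem_singleton_iff] at hω ⊢
    obtain ⟨k, hk, hper⟩ := hω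
    refine ⟨(k+1) % w.length, Nat.mod_lt _ hNpos, fun n => ?_⟩
    have h1 := hper (n+1)
    rw [← Function.iterate_succ_apply, h1]
    apply list_get_congr
    rw [Nat.mod_add_mod]
    congr 1
    omega
  have hBPer : ∀ᵐ ω ∂P, ω ∈ B → ω ∈ PerSet := by
    filter_upwards [hPerB] with ω h hmem
    simp only [hPerdef, Set.mem_iUnion, Set.mem_iInter, Set.mem_preimage,
      Set.mem_singleton_iff]
    refine ⟨0, by omega, fun n => ?_⟩
    rw [h hmem n]
    apply list_get_congr
    simp
  have hPerPos : P PerSet ≠ 0 := by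
    intro h0
    have hnB : ∀ᵐ ω ∂P, ω ∉ B := by
      filter_upwards [hBPer, measure_eq_zero_iff_ae_notMem.mp h0] with ω h1 h2
      exact fun hb => h2 (h1 hb)
    exact hBpos.ne' (measure_eq_zero_iff_ae_notMem.mpr hnB)
  have hPerFull : ∀ᵐ ω ∂P, ω ∈ PerSet := by
    rcases hT.ae_empty_or_univ_of_ae_le_preimage hPerMeas.nullMeasurableSet
        (HasSubset.Subset.eventuallyLE hPerSub) with h | h
    · exact absurd (by rw [measure_congr h]; simp) hPerPos
    · filter_upwards [eventuallyEq_set.mp h] with ω hω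
      simp [hω]
  -- the deterministic sum for the periodic coding
  set fstar : ℕ → ℝ := fun n =>
    (∏ k ∈ Finset.range n, rr (w.get ⟨k % w.length, Nat.mod_lt _ hNpos⟩))
      * br (w.get ⟨n % w.length, Nat.mod_lt _ hNpos⟩) with hfstardef
  obtain ⟨ω₀, hω₀B, hω₀G, hω₀per⟩ :
      ∃ ω₀, ω₀ ∈ B ∧ ω₀ ∈ Good ∧ ∀ n : ℕ,
        ε ((⇑T)^[n] ω₀) = w.get ⟨n % w.length, Nat.mod_lt n hNpos⟩ := by
    by_contra h
    push_neg at h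
    have hnB : ∀ᵐ ω ∂P, ω ∉ B := by
      filter_upwards [hGood_ae, hPerB] with ω h1 h2 hb
      obtain ⟨n, hn⟩ := h ω hb h1
      exact hn (h2 hb n)
    exact hBpos.ne' (measure_eq_zero_iff_ae_notMem.mpr hnB)
  have hgfstar : ∀ ω', ω' ∈ Good →
      (∀ n : ℕ, ε ((⇑T)^[n] ω') = w.get ⟨n % w.length, Nat.mod_lt n hNpos⟩) →
      HasSum fstar (X ω') := by
    intro ω' hG hper
    have h0 : HasSum (g ω') (X ω') := by simpa using hG 0
    have hfeq : g ω' = fstar := by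
      funext n
      simp only [hgdef, hfstardef]
      rw [hper n]
      congr 1
      exact Finset.prod_congr rfl (fun k _ => by rw [hper k])
    rwa [hfeq] at h0
  have hfstarsum : HasSum fstar a := by
    have h := hgfstar ω₀ hω₀G hω₀per
    have hXa : X ω₀ = a := hω₀B
    rwa [hXa] at h
  refine ⟨w, hN, ?_, ?_⟩
  · filter_upwards [hPerFull] with ω hω
    simp only [hPerdef, Set.mem_iUnion, Set.mem_iInter, Set.mem_preimage,
      Set.mem_singleton_iff] at hω
    obtain ⟨k, hk, hper⟩ := hω
    exact ⟨k, hk, fun n _ => hper n⟩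
  · filter_upwards [hPerFull, hGood_ae] with ω hωPer hωG
    simp only [hPerdef, Set.mem_iUnion, Set.mem_iInter, Set.mem_preimage,
      Set.mem_singleton_iff] at hωPer
    obtain ⟨k, hk, hper⟩ := hωPer
    refine ⟨k, hk, ?_⟩
    set ω' := (⇑T)^[w.length - k] ω with hω'def
    have hper' : ∀ n : ℕ, ε ((⇑T)^[n] ω') = w.get ⟨n % w.length, Nat.mod_lt n hNpos⟩ := by
      intro n
      have heq : (⇑T)^[n] ω' = (⇑T)^[n + (w.length - k)] ω := by
        rw [hω'def, ← Function.iterate_add_apply]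
      rw [heq, hper (n + (w.length - k))]
      apply list_get_congr
      have h5 : k + (n + (w.length - k)) = n + w.length := by omega
      rw [h5, Nat.add_mod_right]
    have hXω' : X ω' = a := by
      have h1 : HasSum fstar (X ω') := hgfstar ω' (hGoodT ω hωG _) hper'
      exact h1.unique hfstarsum
    have hrec := hRec ω hωG (w.length - k)
    have hwd : wrd (⇑T) ε (w.length - k) ω = w.drop k := by
      apply List.ext_getElem
      · simp
      · intro n h1 h2
        have hn : n < w.length - k := by simpa using h1
        have hkn : k + n < w.length := by omega
        rw [wrd_getElem _ _ n hn, List.getElem_drop]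
        have h3 := hper n
        rw [List.get_eq_getElem] at h3
        rw [h3]
        exact list_getElem_congr (Nat.mod_eq_of_lt hkn) _ _
    rw [hwd, ← hω'def] at hrec
    rw [hrec, hXω', hwfix]
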